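/- Let k, L, t be integers with 2 ≤ k ≤ n, L ≥ 1 and 0 ≤ t ≤ n−k. Let D_1, …, D_{n−t} be the groups present after t merging steps of the single-linkage algorithm on (X, dist), and let D'_1, …, D'_{n−t−1} be the groups present after t+1 merging steps. Suppose that the groups D'_1, …, D'_{n−t−1} cannot be merged into a k-clustering in which every group has at least L points, i.e., there is no partition of {D'_1, …, D'_{n−t−1}} into k nonempty families such that the union of each family contains at least L points. Then every k-clustering A of X whose groups are unions of the groups D_1, …, D_{n−t} satisfies Min-Sp(A) ≥ Min-Sp(C*) for every (k, L)-clustering C* of X. -/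

import Mathlib

open scoped Classical

namespace ClusterSpacing

variable {X : Type*}

/-- The spacing between two groups: the minimum (infimum) distance between a
point of `A` and a point of `B`. -/
noncomputable def spacing (dist : X → X → ℝ) (A B : Set X) : ℝ :=
  sInf {d : ℝ | ∃ x ∈ A, ∃ y ∈ B, d = dist x y}

/-- The weight of an (unordered) edge between two groups. For symmetric `dist`
this coincides with `spacing`. -/
noncomputable def edgeWeight (dist : X → X → ℝ) : Sym2 (Set X) → ℝ :=
  Sym2.lift ⟨fun A B =>
    sInf ({d : ℝ | ∃ x ∈ A, ∃ y ∈ B, d = dist x y} ∪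
          {d : ℝ | ∃ x ∈ B, ∃ y ∈ A, d = dist x y}),
    fun A B => by beta_reduce; rw [Set.union_comm]⟩

/-- A clustering of `X`: a partition of `X` into nonempty groups. -/
def IsClustering (𝒞 : Set (Set X)) : Prop :=
  (∀ A ∈ 𝒞, A.Nonempty) ∧ ⋃₀ 𝒞 = Set.univ ∧
    ∀ A ∈ 𝒞, ∀ B ∈ 𝒞, A ≠ B → Disjoint A B

/-- The minimum spacing of a clustering: the minimum spacing over pairs of
distinct groups. -/
noncomputable def MinSp (dist : X → X → ℝ) (𝒞 : Set (Set X)) : ℝ :=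
  sInf {d : ℝ | ∃ A ∈ 𝒞, ∃ B ∈ 𝒞, A ≠ B ∧ d = spacing dist A B}

/-- Total weight of (the edges of) a graph on the groups of a clustering. -/
noncomputable def treeCost (dist : X → X → ℝ) (𝒞 : Set (Set X))
    (T : SimpleGraph {A : Set X // A ∈ 𝒞}) : ℝ :=
  ∑ᶠ e ∈ T.edgeSet, edgeWeight dist (Sym2.map Subtype.val e)

/-- The MST spacing of a clustering: the minimum, over all spanning trees of the
complete graph on the groups, of the total edge weight. -/
noncomputable def MSTSp (dist : X → X → ℝ) (𝒞 : Set (Set X)) : ℝ :=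
  sInf {c : ℝ | ∃ T : SimpleGraph {A : Set X // A ∈ 𝒞}, T.IsTree ∧ treeCost dist 𝒞 T = c}

/-- `T` is a minimum spanning tree of the complete graph `G_𝒞` on the groups of `𝒞`. -/
def IsMST (dist : X → X → ℝ) (𝒞 : Set (Set X))
    (T : SimpleGraph {A : Set X // A ∈ 𝒞}) : Prop :=
  T.IsTree ∧ ∀ T' : SimpleGraph {A : Set X // A ∈ 𝒞}, T'.IsTree →
    treeCost dist 𝒞 T ≤ treeCost dist 𝒞 T'

/-- `SingleLinkage dist t 𝒟` holds iff `𝒟` is the collection of groups present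
after `t` merging steps of the single-linkage algorithm. -/
inductive SingleLinkage (dist : X → X → ℝ) : ℕ → Set (Set X) → Prop
  | zero : SingleLinkage dist 0 {A : Set X | ∃ x : X, A = {x}}
  | succ (t : ℕ) (𝒟 : Set (Set X)) (A B : Set X) :
      SingleLinkage dist t 𝒟 → A ∈ 𝒟 → B ∈ 𝒟 → A ≠ B →
      (∀ A' ∈ 𝒟, ∀ B' ∈ 𝒟, A' ≠ B' → spacing dist A B ≤ spacing dist A' B') →
      SingleLinkage dist (t + 1) (insert (A ∪ B) (𝒟 \ {A, B}))

/-- The list of edge weights of a graph on the groups of a clustering, sorted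
in nondecreasing order. -/
noncomputable def edgeWeightsSorted [Fintype X] (dist : X → X → ℝ) (𝒞 : Set (Set X))
    (T : SimpleGraph {A : Set X // A ∈ 𝒞}) : List ℝ :=
  Multiset.sort
    ((T.edgeSet.toFinite.toFinset.val).map (fun e => edgeWeight dist (Sym2.map Subtype.val e))) (· ≤ ·)

section Aux

lemma spacingSet_finite [Finite X] (dist : X → X → ℝ) (A B : Set X) :
    {d : ℝ | ∃ x ∈ A, ∃ y ∈ B, d = dist x y}.Finite := by
  apply (Set.finite_range (fun p : X × X => dist p.1 p.2)).subset
  rintro d ⟨a, -, b, -, rfl⟩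
  exact ⟨(a, b), rfl⟩

lemma spacing_le_dist [Finite X] (dist : X → X → ℝ) {A B : Set X} {x y : X}
    (hx : x ∈ A) (hy : y ∈ B) : spacing dist A B ≤ dist x y :=
  csInf_le (spacingSet_finite dist A B).bddBelow ⟨x, hx, y, hy, rfl⟩

lemma spacing_attained [Finite X] (dist : X → X → ℝ) {A B : Set X}
    (hA : A.Nonempty) (hB : B.Nonempty) :
    ∃ x ∈ A, ∃ y ∈ B, spacing dist A B = dist x y := by
  have hne : {d : ℝ | ∃ x ∈ A, ∃ y ∈ B, d = dist x y}.Nonempty :=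
    ⟨dist hA.choose hB.choose, hA.choose, hA.choose_spec, hB.choose, hB.choose_spec, rfl⟩
  exact hne.csInf_mem (spacingSet_finite dist A B)

lemma IsClustering.eq_of_mem {𝒞 : Set (Set X)} (h : IsClustering 𝒞) {C C' : Set X} {x : X}
    (hC : C ∈ 𝒞) (hC' : C' ∈ 𝒞) (hx : x ∈ C) (hx' : x ∈ C') : C = C' := by
  by_contra hne
  exact Set.disjoint_left.mp (h.2.2 C hC C' hC' hne) hx hx'

lemma step_isClustering {𝒟 : Set (Set X)} (h : IsClustering 𝒟) {A B : Set X}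
    (hA : A ∈ 𝒟) (hB : B ∈ 𝒟) (hAB : A ≠ B) :
    IsClustering (insert (A ∪ B) (𝒟 \ {A, B})) := by
  refine ⟨?_, ?_, ?_⟩
  · rintro C (rfl | ⟨hC, -⟩)
    · exact (h.1 A hA).mono Set.subset_union_left
    · exact h.1 C hC
  · apply Set.eq_univ_of_forall
    intro x
    have hx : x ∈ ⋃₀ 𝒟 := h.2.1 ▸ Set.mem_univ x
    obtain ⟨D, hD, hxD⟩ := hx
    by_cases hDA : D = A
    · exact ⟨A ∪ B, Set.mem_insert _ _, Or.inl (hDA ▸ hxD)⟩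
    by_cases hDB : D = B
    · exact ⟨A ∪ B, Set.mem_insert _ _, Or.inr (hDB ▸ hxD)⟩
    · exact ⟨D, Set.mem_insert_of_mem _ ⟨hD, by simp [hDA, hDB]⟩, hxD⟩
  · rintro C (rfl | ⟨hC, hCp⟩) C' (rfl | ⟨hC', hC'p⟩) hne
    · exact absurd rfl hne
    · have h1 : C' ≠ A := fun hh => hC'p (by simp [hh])
      have h2 : C' ≠ B := fun hh => hC'p (by simp [hh])
      exact Set.disjoint_union_left.mpr
        ⟨h.2.2 A hA C' hC' h1.symm, h.2.2 B hB C' hC' h2.symm⟩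
    · have h1 : C ≠ A := fun hh => hCp (by simp [hh])
      have h2 : C ≠ B := fun hh => hCp (by simp [hh])
      exact (Set.disjoint_union_left.mpr
        ⟨h.2.2 A hA C hC h1.symm, h.2.2 B hB C hC h2.symm⟩).symm
    · exact h.2.2 C hC C' hC' hne

lemma sl_isClustering (dist : X → X → ℝ) :
    ∀ {s : ℕ} {𝒟 : Set (Set X)}, SingleLinkage dist s 𝒟 → IsClustering 𝒟 := by
  intro s 𝒟 h
  induction h with
  | zero =>
    refine ⟨?_, ?_, ?_⟩
    · rintro A ⟨x, rfl⟩; exact ⟨x, rfl⟩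
    · apply Set.eq_univ_of_forall
      intro x; exact ⟨{x}, ⟨x, rfl⟩, rfl⟩
    · rintro A ⟨x, rfl⟩ B ⟨y, rfl⟩ hne
      exact Set.disjoint_singleton.mpr (fun hh => hne (by rw [hh]))
  | succ t 𝒟 A B h hA hB hAB hmin ih => exact step_isClustering ih hA hB hAB

lemma sl_unique [Finite X] (dist : X → X → ℝ)
    (hdistinct : ∀ x y x' y' : X, x ≠ y → x' ≠ y' → dist x y = dist x' y' →
      (x = x' ∧ y = y') ∨ (x = y' ∧ y = x')) :
    ∀ (s : ℕ) {𝒟₁ 𝒟₂ : Set (Set X)}, SingleLinkage dist s 𝒟₁ → SingleLinkage dist s 𝒟₂ →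
      𝒟₁ = 𝒟₂ := by
  intro s
  induction s with
  | zero =>
    intro 𝒟₁ 𝒟₂ h1 h2
    cases h1; cases h2; rfl
  | succ n ih =>
    intro 𝒟₁ 𝒟₂ h1 h2
    cases h1 with
    | succ _ 𝒟 A B h hA hB hAB hmin =>
    cases h2 with
    | succ _ 𝒟₀ A' B' h' hA' hB' hAB' hmin' =>
    obtain rfl : 𝒟 = 𝒟₀ := ih h h'
    have hclus := sl_isClustering dist h
    have heq : spacing dist A B = spacing dist A' B' :=
      le_antisymm (hmin A' hA' B' hB' hAB') (hmin' A hA B hB hAB)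
    obtain ⟨x, hx, y, hy, hxy⟩ := spacing_attained dist (hclus.1 A hA) (hclus.1 B hB)
    obtain ⟨x', hx', y', hy', hxy'⟩ := spacing_attained dist (hclus.1 A' hA') (hclus.1 B' hB')
    have hxne : x ≠ y := by
      rintro rfl; exact Set.disjoint_left.mp (hclus.2.2 A hA B hB hAB) hx hy
    have hxne' : x' ≠ y' := by
      rintro rfl; exact Set.disjoint_left.mp (hclus.2.2 A' hA' B' hB' hAB') hx' hy'
    have hdd : dist x y = dist x' y' := by rw [← hxy, ← hxy', heq]
    rcases hdistinct x y x' y' hxne hxne' hdd with ⟨rfl, rfl⟩ | ⟨rfl, rfl⟩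
    · obtain rfl : A = A' := hclus.eq_of_mem hA hA' hx hx'
      obtain rfl : B = B' := hclus.eq_of_mem hB hB' hy hy'
      rfl
    · obtain rfl : A = B' := hclus.eq_of_mem hA hB' hx hy'
      obtain rfl : B = A' := hclus.eq_of_mem hB hA' hy hx'
      rw [Set.union_comm, Set.pair_comm]

def ConnIn (dist : X → X → ℝ) (w : ℝ) (D : Set X) : Prop :=
  ∀ x ∈ D, ∀ y ∈ D, Relation.ReflTransGen (fun a b => a ∈ D ∧ b ∈ D ∧ dist a b ≤ w) x y

lemma path_mono (dist : X → X → ℝ) {D D' : Set X} {w w' : ℝ} (hw : w ≤ w') (hD : D ⊆ D')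
    {x y : X} (h : Relation.ReflTransGen (fun a b => a ∈ D ∧ b ∈ D ∧ dist a b ≤ w) x y) :
    Relation.ReflTransGen (fun a b => a ∈ D' ∧ b ∈ D' ∧ dist a b ≤ w') x y :=
  Relation.ReflTransGen.mono (p := fun a b => a ∈ D' ∧ b ∈ D' ∧ dist a b ≤ w')
    (fun a b hab => ⟨hD hab.1, hD hab.2.1, hab.2.2.trans hw⟩) x y h

lemma le_spacing_of_pieces [Finite X] (dist : X → X → ℝ) {𝒟 : Set (Set X)} {A B : Set X}
    (hmin : ∀ A' ∈ 𝒟, ∀ B' ∈ 𝒟, A' ≠ B' → spacing dist A B ≤ spacing dist A' B')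
    {C C' : Set X} (hCne : C.Nonempty) (hC'ne : C'.Nonempty) (hdisj : Disjoint C C')
    (hCp : ∀ x ∈ C, ∃ D ∈ 𝒟, x ∈ D ∧ D ⊆ C)
    (hC'p : ∀ x ∈ C', ∃ D ∈ 𝒟, x ∈ D ∧ D ⊆ C') :
    spacing dist A B ≤ spacing dist C C' := by
  obtain ⟨x, hx, y, hy, hxy⟩ := spacing_attained dist hCne hC'ne
  obtain ⟨Dx, hDx, hxDx, hDxC⟩ := hCp x hx
  obtain ⟨Dy, hDy, hyDy, hDyC⟩ := hC'p y hy
  have hne : Dx ≠ Dy := by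
    rintro rfl; exact Set.disjoint_left.mp hdisj hx (hDyC hxDx)
  calc spacing dist A B ≤ spacing dist Dx Dy := hmin Dx hDx Dy hDy hne
    _ ≤ dist x y := spacing_le_dist dist hxDx hyDy
    _ = spacing dist C C' := hxy.symm

lemma connIn_union [Finite X] (dist : X → X → ℝ)
    (hsymm : ∀ x y : X, dist x y = dist y x) {A B : Set X}
    (hAne : A.Nonempty) (hBne : B.Nonempty)
    (hconnA : ConnIn dist (spacing dist A B) A) (hconnB : ConnIn dist (spacing dist A B) B) :
    ConnIn dist (spacing dist A B) (A ∪ B) := by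
  set w := spacing dist A B with hw
  obtain ⟨p, hp, q, hq, hpq⟩ := spacing_attained dist hAne hBne
  have liftA : ∀ {x y : X}, x ∈ A → y ∈ A →
      Relation.ReflTransGen (fun a b => a ∈ A ∪ B ∧ b ∈ A ∪ B ∧ dist a b ≤ w) x y :=
    fun hx hy => path_mono dist le_rfl Set.subset_union_left (hconnA _ hx _ hy)
  have liftB : ∀ {x y : X}, x ∈ B → y ∈ B →
      Relation.ReflTransGen (fun a b => a ∈ A ∪ B ∧ b ∈ A ∪ B ∧ dist a b ≤ w) x y :=
    fun hx hy => path_mono dist le_rfl Set.subset_union_right (hconnB _ hx _ hy)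
  have bridge : Relation.ReflTransGen (fun a b => a ∈ A ∪ B ∧ b ∈ A ∪ B ∧ dist a b ≤ w) p q :=
    Relation.ReflTransGen.single ⟨Or.inl hp, Or.inr hq, le_of_eq hpq.symm⟩
  have bridge' : Relation.ReflTransGen (fun a b => a ∈ A ∪ B ∧ b ∈ A ∪ B ∧ dist a b ≤ w) q p :=
    Relation.ReflTransGen.single ⟨Or.inr hq, Or.inl hp, by rw [hsymm]; exact le_of_eq hpq.symm⟩
  rintro x (hx | hx) y (hy | hy)
  · exact liftA hx hy
  · exact ((liftA hx hp).trans bridge).trans (liftB hq hy)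
  · exact ((liftB hx hq).trans bridge').trans (liftA hp hy)
  · exact liftB hx hy

lemma sl_conn [Finite X] (dist : X → X → ℝ) (hsymm : ∀ x y : X, dist x y = dist y x) :
    ∀ {s : ℕ} {𝒟 : Set (Set X)}, SingleLinkage dist s 𝒟 →
      ∀ D ∈ 𝒟, ∀ C ∈ 𝒟, ∀ C' ∈ 𝒟, C ≠ C' → ConnIn dist (spacing dist C C') D := by
  intro s 𝒟 h
  induction h with
  | zero =>
    rintro D ⟨x, rfl⟩ C - C' - - a ha b hb
    obtain rfl : a = x := ha
    obtain rfl : b = a := hb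
    exact Relation.ReflTransGen.refl
  | succ t 𝒟 A B h hA hB hAB hmin ih =>
    intro D hD C hC C' hC' hne
    have hclus := sl_isClustering dist h
    have hstep := step_isClustering hclus hA hB hAB
    have hge : spacing dist A B ≤ spacing dist C C' := by
      apply le_spacing_of_pieces dist hmin (hstep.1 C hC) (hstep.1 C' hC')
        (hstep.2.2 C hC C' hC' hne)
      · rcases hC with rfl | ⟨hC𝒟, -⟩
        · rintro x (hx | hx)
          · exact ⟨A, hA, hx, Set.subset_union_left⟩
          · exact ⟨B, hB, hx, Set.subset_union_right⟩
        · exact fun x hx => ⟨C, hC𝒟, hx, subset_rfl⟩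
      · rcases hC' with rfl | ⟨hC'𝒟, -⟩
        · rintro x (hx | hx)
          · exact ⟨A, hA, hx, Set.subset_union_left⟩
          · exact ⟨B, hB, hx, Set.subset_union_right⟩
        · exact fun x hx => ⟨C', hC'𝒟, hx, subset_rfl⟩
    have key : ConnIn dist (spacing dist A B) D := by
      rcases hD with rfl | ⟨hD𝒟, -⟩
      · exact connIn_union dist hsymm (hclus.1 A hA) (hclus.1 B hB)
          (ih A hA A hA B hB hAB) (ih B hB A hA B hB hAB)
      · exact ih D hD𝒟 A hA B hB hAB
    intro x hx y hy
    exact path_mono dist hge subset_rfl (key x hx y hy)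

lemma exists_cross {𝒞 : Set (Set X)} (h𝒞 : IsClustering 𝒞) {r : X → X → Prop} {x y : X}
    (hpath : Relation.ReflTransGen r x y) :
    ∀ Cx ∈ 𝒞, ∀ Cy ∈ 𝒞, x ∈ Cx → y ∈ Cy → Cx ≠ Cy →
      ∃ a b, r a b ∧ ∃ Ca ∈ 𝒞, ∃ Cb ∈ 𝒞, a ∈ Ca ∧ b ∈ Cb ∧ Ca ≠ Cb := by
  induction hpath with
  | refl =>
    intro Cx hCx Cy hCy hx hy hne
    exact absurd (h𝒞.eq_of_mem hCx hCy hx hy) hne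
  | @tail b c hab hbc ihp =>
    intro Cx hCx Cy hCy hx hy hne
    have hb : b ∈ ⋃₀ 𝒞 := h𝒞.2.1 ▸ Set.mem_univ b
    obtain ⟨Cb, hCb, hbCb⟩ := hb
    by_cases hCbCy : Cb = Cy
    · subst hCbCy
      exact ihp Cx hCx Cb hCb hx hbCb hne
    · exact ⟨b, c, hbc, Cb, hCb, Cy, hCy, hbCb, hy, hCbCy⟩

lemma minSpSet_finite [Finite X] (dist : X → X → ℝ) (𝒞 : Set (Set X)) :
    {d : ℝ | ∃ A ∈ 𝒞, ∃ B ∈ 𝒞, A ≠ B ∧ d = spacing dist A B}.Finite := by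
  apply (Set.finite_range (fun p : Set X × Set X => spacing dist p.1 p.2)).subset
  rintro d ⟨A, -, B, -, -, rfl⟩
  exact ⟨(A, B), rfl⟩

lemma minSp_le [Finite X] (dist : X → X → ℝ) {𝒞 : Set (Set X)} {A B : Set X}
    (hA : A ∈ 𝒞) (hB : B ∈ 𝒞) (hne : A ≠ B) : MinSp dist 𝒞 ≤ spacing dist A B :=
  csInf_le (minSpSet_finite dist 𝒞).bddBelow ⟨A, hA, B, hB, hne, rfl⟩

end Aux

theorem minSp_of_coarsening_ge_constrained_opt {X : Type*} [Fintype X] (dist : X → X → ℝ)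
    (hsymm : ∀ x y : X, dist x y = dist y x)
    (hpos : ∀ x y : X, x ≠ y → 0 < dist x y)
    (hdistinct : ∀ x y x' y' : X, x ≠ y → x' ≠ y' → dist x y = dist x' y' →
      (x = x' ∧ y = y') ∨ (x = y' ∧ y = x'))
    (k L t : ℕ) (hk : 2 ≤ k) (hkn : k ≤ Fintype.card X) (hL : 1 ≤ L)
    (ht : t ≤ Fintype.card X - k)
    (𝒟 𝒟' : Set (Set X))
    (h𝒟 : SingleLinkage dist t 𝒟) (h𝒟' : SingleLinkage dist (t + 1) 𝒟')
    (hno : ¬ ∃ F : Set (Set (Set X)),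
      (∀ f ∈ F, f.Nonempty) ∧ ⋃₀ F = 𝒟' ∧
      (∀ f ∈ F, ∀ g ∈ F, f ≠ g → Disjoint f g) ∧ F.ncard = k ∧
      ∀ f ∈ F, L ≤ (⋃₀ f).ncard)
    (𝒜 : Set (Set X)) (h𝒜 : IsClustering 𝒜) (h𝒜k : 𝒜.ncard = k)
    (hunion : ∀ A ∈ 𝒜, ∃ S ⊆ 𝒟, A = ⋃₀ S)
    (𝒞star : Set (Set X)) (h𝒞star : IsClustering 𝒞star) (h𝒞stark : 𝒞star.ncard = k)
    (h𝒞starL : ∀ C ∈ 𝒞star, L ≤ C.ncard) :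
    MinSp dist 𝒞star ≤ MinSp dist 𝒜 := by
  classical
  cases h𝒟' with
  | succ _ 𝒟₀ A B h0 hA hB hAB hmin =>
  obtain rfl : 𝒟 = 𝒟₀ := sl_unique dist hdistinct t h𝒟 h0
  have hclus𝒟 := sl_isClustering dist h𝒟
  have hclusE := step_isClustering hclus𝒟 hA hB hAB
  -- Step A : the last merge weight bounds MinSp 𝒜 from below
  have hAge : spacing dist A B ≤ MinSp dist 𝒜 := by
    apply le_csInf
    · have h2 : 1 < 𝒜.ncard := by rw [h𝒜k]; omega
      obtain ⟨U, hU, V, hV, hUV⟩ := (Set.one_lt_ncard (Set.toFinite 𝒜)).mp h2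
      exact ⟨spacing dist U V, U, hU, V, hV, hUV, rfl⟩
    · rintro r ⟨U, hU, V, hV, hUV, rfl⟩
      have pieces : ∀ W ∈ 𝒜, ∀ x ∈ W, ∃ D ∈ 𝒟, x ∈ D ∧ D ⊆ W := by
        intro W hW x hx
        obtain ⟨S, hS, hWeq⟩ := hunion W hW
        rw [hWeq] at hx
        obtain ⟨D, hD, hxD⟩ := hx
        exact ⟨D, hS hD, hxD, by rw [hWeq]; exact fun z hz => ⟨D, hD, hz⟩⟩
      exact le_spacing_of_pieces dist hmin (h𝒜.1 U hU) (h𝒜.1 V hV)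
        (h𝒜.2.2 U hU V hV hUV) (pieces U hU) (pieces V hV)
  -- Step B : some group of 𝒟' is split by 𝒞star
  have hnotall : ¬ ∀ D ∈ insert (A ∪ B) (𝒟 \ {A, B}), ∃ C ∈ 𝒞star, D ⊆ C := by
    intro hall
    apply hno
    have hUnionEq : ∀ C ∈ 𝒞star,
        ⋃₀ {D | D ∈ insert (A ∪ B) (𝒟 \ {A, B}) ∧ D ⊆ C} = C := by
      intro C hC
      apply Set.Subset.antisymm
      · rintro x ⟨D, ⟨-, hDC⟩, hxD⟩; exact hDC hxD
      · intro x hx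
        have hxu : x ∈ ⋃₀ insert (A ∪ B) (𝒟 \ {A, B}) := hclusE.2.1 ▸ Set.mem_univ x
        obtain ⟨D, hD, hxD⟩ := hxu
        obtain ⟨C', hC', hDC'⟩ := hall D hD
        obtain rfl : C = C' := h𝒞star.eq_of_mem hC hC' hx (hDC' hxD)
        exact ⟨D, ⟨hD, hDC'⟩, hxD⟩
    refine ⟨(fun C => {D | D ∈ insert (A ∪ B) (𝒟 \ {A, B}) ∧ D ⊆ C}) '' 𝒞star,
      ?_, ?_, ?_, ?_, ?_⟩
    · rintro f ⟨C, hC, rfl⟩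
      obtain ⟨x, hx⟩ := h𝒞star.1 C hC
      rw [← hUnionEq C hC] at hx
      obtain ⟨D, hD, -⟩ := hx
      exact ⟨D, hD⟩
    · ext D
      constructor
      · rintro ⟨f, ⟨C, hC, rfl⟩, hDf, -⟩
        exact hDf
      · intro hD
        obtain ⟨C, hC, hDC⟩ := hall D hD
        exact ⟨_, ⟨C, hC, rfl⟩, hD, hDC⟩
    · rintro f ⟨C, hC, rfl⟩ g ⟨C', hC', rfl⟩ hfg
      have hCC' : C ≠ C' := fun hh => hfg (by rw [hh])
      rw [Set.disjoint_left]
      rintro D ⟨hDE, hDC⟩ ⟨-, hDC'⟩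
      obtain ⟨z, hz⟩ := hclusE.1 D hDE
      exact Set.disjoint_left.mp (h𝒞star.2.2 C hC C' hC' hCC') (hDC hz) (hDC' hz)
    · rw [Set.ncard_image_of_injOn, h𝒞stark]
      intro C hC C' hC' hfeq
      obtain ⟨x, hx⟩ := h𝒞star.1 C hC
      have hx' : x ∈ ⋃₀ {D | D ∈ insert (A ∪ B) (𝒟 \ {A, B}) ∧ D ⊆ C} := by
        rw [hUnionEq C hC]; exact hx
      obtain ⟨D, hDm, hxD⟩ := hx'
      have hDm' : D ∈ {D | D ∈ insert (A ∪ B) (𝒟 \ {A, B}) ∧ D ⊆ C'} := by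
        have := hfeq
        simp only [] at this
        rw [← this]
        exact hDm
      exact h𝒞star.eq_of_mem hC hC' hx (hDm'.2 hxD)
    · rintro f ⟨C, hC, rfl⟩
      rw [hUnionEq C hC]
      exact h𝒞starL C hC
  push_neg at hnotall
  obtain ⟨D₀, hD₀, hD₀sub⟩ := hnotall
  obtain ⟨x, hxD₀⟩ := hclusE.1 D₀ hD₀
  have hxu : x ∈ ⋃₀ 𝒞star := h𝒞star.2.1 ▸ Set.mem_univ x
  obtain ⟨Cx, hCx, hxCx⟩ := hxu
  obtain ⟨y, hyD₀, hyCx⟩ : ∃ y ∈ D₀, y ∉ Cx := by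
    by_contra hcon
    push_neg at hcon
    exact hD₀sub Cx hCx hcon
  have hyu : y ∈ ⋃₀ 𝒞star := h𝒞star.2.1 ▸ Set.mem_univ y
  obtain ⟨Cy, hCy, hyCy⟩ := hyu
  have hCxCy : Cx ≠ Cy := fun hh => hyCx (hh ▸ hyCy)
  -- Step C : the split group is connected at level `spacing dist A B`
  have hconn : ConnIn dist (spacing dist A B) D₀ := by
    rcases hD₀ with rfl | ⟨hD𝒟, -⟩
    · exact connIn_union dist hsymm (hclus𝒟.1 A hA) (hclus𝒟.1 B hB)
        (sl_conn dist hsymm h𝒟 A hA A hA B hB hAB)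
        (sl_conn dist hsymm h𝒟 B hB A hA B hB hAB)
    · exact sl_conn dist hsymm h𝒟 D₀ hD𝒟 A hA B hB hAB
  -- Step D : extract a crossing edge
  obtain ⟨a, b, hrab, Ca, hCa, Cb, hCb, haCa, hbCb, hCab⟩ :=
    exists_cross h𝒞star (hconn x hxD₀ y hyD₀) Cx hCx Cy hCy hxCx hyCy hCxCy
  calc MinSp dist 𝒞star ≤ spacing dist Ca Cb := minSp_le dist hCa hCb hCab
    _ ≤ dist a b := spacing_le_dist dist haCa hbCb
    _ ≤ spacing dist A B := hrab.2.2
    _ ≤ MinSp dist 𝒜 := hAge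

end ClusterSpacing
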